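/- Let x ∈ H^n be a point on the hyperboloid of curvature -1/C (C > 0), let W be any real n × (n+1) matrix and v ∈ ℝ^{1×(n+1)} a row vector with vᵀx ≠ 0. Define the (n+1) × (n+1) matrix f whose first row is (sqrt(‖Wx‖² + C) / (v·x)) · v and whose remaining n rows are W. Then f·x lies on H^n, i.e., ⟨f·x, f·x⟩_L = -C and the first coordinate of f·x is positive. -/
import Mathlib


open Matrix BigOperators

noncomputable def lprod {n : ℕ} (x y : Fin (n+1) → ℝ) : ℝ :=
  -(x 0 * y 0) + ∑ i : Fin n, x i.succ * y i.succ

def Hyp (n : ℕ) (C : ℝ) : Set (Fin (n+1) → ℝ) :=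
  {x | lprod x x = -C ∧ 0 < x 0}

noncomputable def arcosh (t : ℝ) : ℝ := Real.log (t + Real.sqrt (t^2 - 1))

noncomputable def dL {n : ℕ} (C : ℝ) (x y : Fin (n+1) → ℝ) : ℝ :=
  Real.sqrt C * arcosh (-(lprod x y) / C)

def gL (n : ℕ) : Matrix (Fin (n+1)) (Fin (n+1)) ℝ :=
  Matrix.diagonal (fun i => if i = 0 then -1 else 1)

noncomputable def boost (n : ℕ) (α : ℝ) : Matrix (Fin (n+1)) (Fin (n+1)) ℝ :=
  Matrix.of fun i j =>
    if i = 0 ∧ j = 0 then Real.cosh α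
    else if (i = 0 ∧ j = 1) ∨ (i = 1 ∧ j = 0) then Real.sinh α
    else if i = 1 ∧ j = 1 then Real.cosh α
    else if i = j then 1 else 0

def srot {n : ℕ} (R : Matrix (Fin n) (Fin n) ℝ) : Matrix (Fin (n+1)) (Fin (n+1)) ℝ :=
  Matrix.of fun i j =>
    if hi : i = 0 then (if j = 0 then 1 else 0)
    else if hj : j = 0 then 0 else R (i.pred hi) (j.pred hj)

theorem stmt3 {n : ℕ} {C : ℝ} (hC : 0 < C) (x : Fin (n+1) → ℝ) (hx : x ∈ Hyp n C)
    (W : Matrix (Fin n) (Fin (n+1)) ℝ) (v : Fin (n+1) → ℝ) (hv : v ⬝ᵥ x ≠ 0) :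
    (Matrix.of (fun i j =>
      if h : i = 0 then (Real.sqrt ((∑ k : Fin n, (W.mulVec x k)^2) + C) / (v ⬝ᵥ x)) * v j
      else W (i.pred h) j) : Matrix (Fin (n+1)) (Fin (n+1)) ℝ).mulVec x ∈ Hyp n C := by
  set S : ℝ := ∑ k : Fin n, (W.mulVec x k)^2 with hS
  have hSnn : 0 ≤ S := Finset.sum_nonneg fun k _ => sq_nonneg _
  have hSC : 0 < S + C := by linarith
  set f : Matrix (Fin (n+1)) (Fin (n+1)) ℝ := Matrix.of (fun i j =>
      if h : i = 0 then (Real.sqrt (S + C) / (v ⬝ᵥ x)) * v j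
      else W (i.pred h) j) with hf
  have h0 : f.mulVec x 0 = Real.sqrt (S + C) := by
    have hvx : (∑ i, v i * x i) ≠ 0 := hv
    simp only [Matrix.mulVec, dotProduct, hf, Matrix.of_apply, dif_pos rfl, dite_true]
    simp only [mul_assoc, ← Finset.mul_sum]
    field_simp
  have hsucc : ∀ i : Fin n, f.mulVec x i.succ = W.mulVec x i := by
    intro i
    simp only [Matrix.mulVec, dotProduct, hf, Matrix.of_apply,
      dif_neg (Fin.succ_ne_zero i), Fin.pred_succ]
  constructor
  · simp only [lprod, h0, hsucc]
    have : Real.sqrt (S + C) * Real.sqrt (S + C) = S + C :=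
      Real.mul_self_sqrt hSC.le
    simp only [← sq]
    rw [← hS]
    nlinarith [Real.sq_sqrt hSC.le]
  · rw [h0]; exact Real.sqrt_pos.mpr hSC
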